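/- arXiv:2412.01988 — 5 statements merged into one kernel-verified Lean document; each statement's English description precedes it below -/
import Mathlib

section
/- Let p be an odd prime, e a positive integer, and a', b', d integers coprime to p. Then the congruence a'·x₁² + b'·x₂² ≡ d (mod p^e) has an integer solution (x₁, x₂). -/
open Polynomial

private lemma base_case (p : ℕ) [Fact p.Prime] (hodd : Odd p) (a b d : ZMod p)
    (ha : a ≠ 0) (hb : b ≠ 0) : ∃ u v : ZMod p, a * u ^ 2 + b * v ^ 2 = d := by
  have hf2 : (C a * X ^ 2 : (ZMod p)[X]).degree = 2 :=
    Polynomial.degree_C_mul_X_pow 2 ha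
  have hgdeg : (C b * X ^ 2 : (ZMod p)[X]).degree = 2 :=
    Polynomial.degree_C_mul_X_pow 2 hb
  have hcd : (C d : (ZMod p)[X]).degree < (C b * X ^ 2 : (ZMod p)[X]).degree := by
    rw [hgdeg]
    exact lt_of_le_of_lt (Polynomial.degree_C_le) (by norm_num)
  have hg2 : (C b * X ^ 2 - C d : (ZMod p)[X]).degree = 2 := by
    rw [Polynomial.degree_sub_eq_left_of_degree_lt hcd, hgdeg]
  have hcard : Fintype.card (ZMod p) % 2 = 1 := by
    rw [ZMod.card]
    exact Nat.odd_iff.mp hodd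
  obtain ⟨u, v, huv⟩ := FiniteField.exists_root_sum_quadratic hf2 hg2 hcard
  refine ⟨u, v, ?_⟩
  simp only [eval_add, eval_mul, eval_pow, eval_X, eval_C, eval_sub] at huv
  linear_combination huv

private lemma lift_step (p : ℕ) (hp : p.Prime) (hodd : Odd p)
    (a' b' d : ℤ) (ha : ¬ (p : ℤ) ∣ a') (hb : ¬ (p : ℤ) ∣ b') (hd : ¬ (p : ℤ) ∣ d) :
    ∀ e : ℕ, 1 ≤ e → ∃ x y : ℤ, (p : ℤ) ^ e ∣ a' * x ^ 2 + b' * y ^ 2 - d := by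
  haveI : Fact p.Prime := ⟨hp⟩
  have hp2 : p ≠ 2 := by rintro rfl; simp [Nat.odd_iff] at hodd
  have h2 : ¬ (p : ℤ) ∣ 2 := by
    intro h
    have h4 : (p : ℤ) ≤ 2 := Int.le_of_dvd (by norm_num) h
    have h5 : p ≤ 2 := by exact_mod_cast h4
    have := hp.two_le
    omega
  intro e he
  induction e with
  | zero => omega
  | succ e ih =>
    rcases Nat.eq_or_lt_of_le he with h1 | h1
    · -- e + 1 = 1, base case
      obtain ⟨u, v, huv⟩ := base_case p hodd (a' : ZMod p) (b' : ZMod p) (d : ZMod p)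
        (by rwa [Ne, ZMod.intCast_zmod_eq_zero_iff_dvd])
        (by rwa [Ne, ZMod.intCast_zmod_eq_zero_iff_dvd])
      refine ⟨(u.val : ℤ), (v.val : ℤ), ?_⟩
      rw [← h1, pow_one, ← ZMod.intCast_zmod_eq_zero_iff_dvd]
      push_cast
      simp only [ZMod.natCast_val, ZMod.cast_id]
      linear_combination huv
    · have he' : 1 ≤ e := by omega
      obtain ⟨x, y, hxy⟩ := ih he'
      have hpd : (p : ℤ) ∣ a' * x ^ 2 + b' * y ^ 2 - d :=
        dvd_trans (dvd_pow_self _ (by omega)) hxy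
      have hkey : ¬ (p : ℤ) ∣ x ∨ ¬ (p : ℤ) ∣ y := by
        by_contra h
        push_neg at h
        apply hd
        have hA : (p : ℤ) ∣ a' * x ^ 2 + b' * y ^ 2 :=
          dvd_add (Dvd.dvd.mul_left (dvd_pow h.1 two_ne_zero) _)
            (Dvd.dvd.mul_left (dvd_pow h.2 two_ne_zero) _)
        simpa using dvd_sub hA hpd
      obtain ⟨t, ht⟩ := hxy
      rcases hkey with hx | hy
      · -- adjust x
        have hu : ((2 * a' * x : ℤ) : ZMod p) ≠ 0 := by
          rw [Ne, ZMod.intCast_zmod_eq_zero_iff_dvd]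
          intro h
          rcases (Int.Prime.dvd_mul' hp h) with h' | h'
          · rcases (Int.Prime.dvd_mul' hp h') with h'' | h''
            · exact h2 h''
            · exact ha h''
          · exact hx h'
        set u : ZMod p := ((2 * a' * x : ℤ) : ZMod p) with hu_def
        set s : ℤ := (-t : ℤ) * ((u⁻¹ : ZMod p).val : ℤ) with hs_def
        have hs : (p : ℤ) ∣ 2 * a' * x * s + t := by
          rw [← ZMod.intCast_zmod_eq_zero_iff_dvd]
          push_cast [hs_def]
          simp only [ZMod.natCast_val, ZMod.cast_id]
          have h1' : 2 * (a' : ZMod p) * (x : ZMod p) = u := by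
            rw [hu_def]; push_cast; ring
          rw [h1']
          linear_combination (-(t : ZMod p)) * mul_inv_cancel₀ hu
        refine ⟨x + s * (p:ℤ)^e, y, ?_⟩
        have expand : a' * (x + s * (p:ℤ)^e) ^ 2 + b' * y ^ 2 - d
            = (p:ℤ)^e * (t + 2 * a' * x * s) + a' * s^2 * ((p:ℤ)^e)^2 := by
          linear_combination ht
        rw [expand]
        apply dvd_add
        · rw [pow_succ]
          exact mul_dvd_mul_left _ (by rw [add_comm]; exact hs)
        · have hdd : (p:ℤ)^(e+1) ∣ ((p:ℤ)^e)^2 := by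
            rw [← pow_mul]
            exact pow_dvd_pow _ (by omega)
          exact Dvd.dvd.mul_left hdd _
      · -- adjust y
        have hu : ((2 * b' * y : ℤ) : ZMod p) ≠ 0 := by
          rw [Ne, ZMod.intCast_zmod_eq_zero_iff_dvd]
          intro h
          rcases (Int.Prime.dvd_mul' hp h) with h' | h'
          · rcases (Int.Prime.dvd_mul' hp h') with h'' | h''
            · exact h2 h''
            · exact hb h''
          · exact hy h'
        set u : ZMod p := ((2 * b' * y : ℤ) : ZMod p) with hu_def
        set s : ℤ := (-t : ℤ) * ((u⁻¹ : ZMod p).val : ℤ) with hs_def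
        have hs : (p : ℤ) ∣ 2 * b' * y * s + t := by
          rw [← ZMod.intCast_zmod_eq_zero_iff_dvd]
          push_cast [hs_def]
          simp only [ZMod.natCast_val, ZMod.cast_id]
          have h1' : 2 * (b' : ZMod p) * (y : ZMod p) = u := by
            rw [hu_def]; push_cast; ring
          rw [h1']
          linear_combination (-(t : ZMod p)) * mul_inv_cancel₀ hu
        refine ⟨x, y + s * (p:ℤ)^e, ?_⟩
        have expand : a' * x ^ 2 + b' * (y + s * (p:ℤ)^e) ^ 2 - d
            = (p:ℤ)^e * (t + 2 * b' * y * s) + b' * s^2 * ((p:ℤ)^e)^2 := by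
          linear_combination ht
        rw [expand]
        apply dvd_add
        · rw [pow_succ]
          exact mul_dvd_mul_left _ (by rw [add_comm]; exact hs)
        · have hdd : (p:ℤ)^(e+1) ∣ ((p:ℤ)^e)^2 := by
            rw [← pow_mul]
            exact pow_dvd_pow _ (by omega)
          exact Dvd.dvd.mul_left hdd _

theorem stmt_0 (p : ℕ) (hp : p.Prime) (hodd : Odd p) (e : ℕ) (he : 1 ≤ e)
    (a' b' d : ℤ) (ha : ¬ (p : ℤ) ∣ a') (hb : ¬ (p : ℤ) ∣ b') (hd : ¬ (p : ℤ) ∣ d) :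
    ∃ x₁ x₂ : ℤ, a' * x₁ ^ 2 + b' * x₂ ^ 2 ≡ d [ZMOD (p ^ e : ℕ)] := by
  obtain ⟨x, y, hxy⟩ := lift_step p hp hodd a' b' d ha hb hd e he
  refine ⟨x, y, ?_⟩
  exact (Int.modEq_iff_dvd.mpr (by push_cast; exact hxy)).symm
end

section
/- Let m be a positive integer and a an integer with 0 ≤ a < m that is a sum of three squares modulo m. Then there exists a squarefree integer a' ∈ [1, 5m] such that a' is a sum of three squares modulo m and a ≡ a'·d² (mod m) for some integer d. -/
private lemma mk_modEq {n a b : ℤ} (c : ℤ) (h : b - a = n * c) : a ≡ b [ZMOD n] :=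
  Int.modEq_iff_dvd.2 ⟨c, h⟩

private lemma even3 {x₁ x₂ x₃ : ℤ} (h : (4:ℤ) ∣ x₁^2+x₂^2+x₃^2) :
    Even x₁ ∧ Even x₂ ∧ Even x₃ := by
  have q : ∀ x : ℤ, (x^2 % 4 = 0 ∧ Even x) ∨ x^2 % 4 = 1 := by
    intro x
    rcases Int.even_or_odd x with hx | hx
    · obtain ⟨k, rfl⟩ := hx
      left
      refine ⟨?_, ⟨k, rfl⟩⟩
      have : (k+k)^2 = 0 + (k^2) * 4 := by ring
      rw [this, Int.add_mul_emod_self_right]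
      norm_num
    · obtain ⟨k, rfl⟩ := hx
      right
      have : (2*k+1)^2 = 1 + (k^2+k) * 4 := by ring
      rw [this, Int.add_mul_emod_self_right]
      norm_num
  rcases q x₁ with ⟨a1, e1⟩ | a1 <;> rcases q x₂ with ⟨a2, e2⟩ | a2 <;>
    rcases q x₃ with ⟨a3, e3⟩ | a3
  · exact ⟨e1, e2, e3⟩
  all_goals (exfalso; omega)

private lemma two_strip : ∀ e : ℕ, ∀ a x₁ x₂ x₃ : ℤ,
    x₁^2+x₂^2+x₃^2 ≡ a [ZMOD (2:ℤ)^e] →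
    ∃ b f y₁ y₂ y₃ : ℤ, y₁^2+y₂^2+y₃^2 = b ∧ a ≡ b * f^2 [ZMOD (2:ℤ)^e] ∧
      ((2:ℤ) ∣ b → (2 ≤ e ∧ ¬ (4:ℤ) ∣ b)) := by
  intro e
  induction e using Nat.strong_induction_on with
  | _ e IH =>
  intro a x₁ x₂ x₃ hx
  match e, IH with
  | 0, _ =>
    exact ⟨1, 1, 1, 0, 0, by ring, by simpa using Int.modEq_one, by norm_num⟩
  | 1, _ =>
    by_cases h2 : (2:ℤ) ∣ a
    · obtain ⟨c, rfl⟩ := h2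
      exact ⟨1, 2, 1, 0, 0, by ring, mk_modEq (2 - c) (by ring), by norm_num⟩
    · refine ⟨1, 1, 1, 0, 0, by ring, ?_, by norm_num⟩
      have := Int.emod_emod_of_dvd a (dvd_refl (2:ℤ))
      show a % (2^1) = (1*1^2) % (2^1)
      omega
  | (e+2), IH =>
    by_cases h4 : (4:ℤ) ∣ x₁^2+x₂^2+x₃^2
    · obtain ⟨⟨z₁, hz₁⟩, ⟨z₂, hz₂⟩, ⟨z₃, hz₃⟩⟩ := even3 h4
      have h4a : (4:ℤ) ∣ a := by
        have h1 : x₁^2+x₂^2+x₃^2 ≡ a [ZMOD (4:ℤ)] :=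
          hx.of_dvd ⟨2^e, by ring⟩
        have := (Int.modEq_iff_dvd.1 h1)
        omega
      obtain ⟨a₁, rfl⟩ := h4a
      have hz : z₁^2+z₂^2+z₃^2 ≡ a₁ [ZMOD (2:ℤ)^e] := by
        obtain ⟨c, hc⟩ := Int.modEq_iff_dvd.1 hx
        refine mk_modEq c ?_
        have h2 : (4:ℤ) * (a₁ - (z₁^2+z₂^2+z₃^2)) = 4 * (2^e * c) := by
          subst hz₁ hz₂ hz₃
          rw [show (2:ℤ)^(e+2) = 4 * 2^e by ring] at hc
          linarith [hc]
        have := mul_left_cancel₀ (by norm_num : (4:ℤ) ≠ 0) h2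
        linarith
      obtain ⟨b, f, y₁, y₂, y₃, hyb, hbf, hcond⟩ := IH e (by omega) a₁ z₁ z₂ z₃ hz
      refine ⟨b, 2*f, y₁, y₂, y₃, hyb, ?_, fun h2b => ⟨by omega, (hcond h2b).2⟩⟩
      obtain ⟨c, hc⟩ := Int.modEq_iff_dvd.1 hbf
      exact mk_modEq c (by rw [show (2:ℤ)^(e+2) = 4 * 2^e by ring]; linarith)
    · exact ⟨x₁^2+x₂^2+x₃^2, 1, x₁, x₂, x₃, rfl,
        by simpa using hx.symm, fun _ => ⟨by omega, h4⟩⟩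

private lemma sq3_mod_odd_pow (p : ℕ) (hp : p.Prime) (hp2 : p ≠ 2) (e : ℕ) (c : ℤ) :
    ∃ y₁ y₂ y₃ : ℤ, y₁^2+y₂^2+y₃^2 ≡ c [ZMOD (p:ℤ)^e] := by
  haveI : Fact p.Prime := ⟨hp⟩
  rcases e with _ | e
  · exact ⟨0, 0, 0, by simpa using Int.modEq_one⟩
  suffices key : ∀ e : ℕ, ∃ y₁ y₂ y₃ : ℤ,
      (y₁^2+y₂^2+y₃^2 ≡ c [ZMOD (p:ℤ)^(e+1)]) ∧ ¬ (p:ℤ) ∣ y₃ by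
    obtain ⟨y₁, y₂, y₃, hy, _⟩ := key e
    exact ⟨y₁, y₂, y₃, hy⟩
  intro e
  induction e with
  | zero =>
    obtain ⟨u, v, huv⟩ := ZMod.sq_add_sq p ((c - 1 : ℤ) : ZMod p)
    refine ⟨(u.val : ℤ), (v.val : ℤ), 1, ?_, ?_⟩
    · rw [pow_one, ← ZMod.intCast_eq_intCast_iff]
      push_cast
      rw [ZMod.natCast_val, ZMod.natCast_val, ZMod.cast_id, ZMod.cast_id, huv]
      push_cast
      ring
    · intro hdvd
      have : (p:ℤ) ≤ 1 := Int.le_of_dvd one_pos hdvd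
      have := hp.two_le
      omega
  | succ e IH =>
    obtain ⟨y₁, y₂, y₃, hy, hy₃⟩ := IH
    obtain ⟨D, hD⟩ := Int.modEq_iff_dvd.1 hy
    have hunit : ((2 * y₃ : ℤ) : ZMod p) ≠ 0 := by
      rw [Ne, ZMod.intCast_zmod_eq_zero_iff_dvd]
      intro hdvd
      rcases Int.Prime.dvd_mul' hp hdvd with h2 | h3
      · have h2' : p ∣ 2 := by exact_mod_cast h2
        exact hp2 ((Nat.prime_dvd_prime_iff_eq hp Nat.prime_two).1 h2')
      · exact hy₃ h3
    obtain ⟨t, ht⟩ := ZMod.intCast_surjective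
      ((D : ZMod p) * (((2 * y₃ : ℤ) : ZMod p))⁻¹)
    have hmod : 2*y₃*t ≡ D [ZMOD (p:ℤ)] := by
      rw [← ZMod.intCast_eq_intCast_iff]
      push_cast
      push_cast at ht
      rw [ht]
      push_cast at hunit
      field_simp
      exact mul_div_cancel_left₀ _ hunit
    obtain ⟨s, hs⟩ := Int.modEq_iff_dvd.1 hmod
    refine ⟨y₁, y₂, y₃ + t * (p:ℤ)^(e+1), ?_, ?_⟩
    · refine (mk_modEq (s - t^2 * (p:ℤ)^e) ?_)
      linear_combination hD + ((p:ℤ)^(e+1)) * hs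
    · intro hdvd
      have h2 : (p:ℤ) ∣ t * (p:ℤ)^(e+1) := ⟨t * (p:ℤ)^e, by ring⟩
      have := dvd_sub hdvd h2
      simp only [add_sub_cancel_right] at this
      exact hy₃ this

private lemma odd_strip (p : ℕ) (hp : p.Prime) : ∀ e : ℕ, ∀ a : ℤ,
    ∃ b f : ℤ, a ≡ b * f^2 [ZMOD (p:ℤ)^e] ∧
      ((p:ℤ) ∣ b → (2 ≤ e ∧ ¬ (p:ℤ)^2 ∣ b)) := by
  have hp1 : ¬ (p:ℤ) ∣ 1 := by
    intro hdvd
    have : (p:ℤ) ≤ 1 := Int.le_of_dvd one_pos hdvd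
    have := hp.two_le; omega
  intro e
  induction e using Nat.strong_induction_on with
  | _ e IH =>
  intro a
  match e, IH with
  | 0, _ => exact ⟨1, 1, by simpa using Int.modEq_one, fun h => absurd h hp1⟩
  | 1, _ =>
    by_cases hpa : (p:ℤ) ∣ a
    · obtain ⟨c, rfl⟩ := hpa
      exact ⟨1, (p:ℤ), mk_modEq ((p:ℤ) - c) (by rw [pow_one]; ring),
        fun h => absurd h hp1⟩
    · exact ⟨a, 1, by simpa using Int.ModEq.refl a, fun h => absurd h hpa⟩
  | (e+2), IH =>
    by_cases hp2a : (p:ℤ)^2 ∣ a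
    · obtain ⟨a₁, rfl⟩ := hp2a
      obtain ⟨b, f, hbf, hcond⟩ := IH e (by omega) a₁
      obtain ⟨c, hc⟩ := Int.modEq_iff_dvd.1 hbf
      refine ⟨b, (p:ℤ) * f, mk_modEq c ?_, fun h => ⟨by omega, (hcond h).2⟩⟩
      linear_combination ((p:ℤ)^2) * hc
    · exact ⟨a, 1, by simpa using Int.ModEq.refl a, fun _ => ⟨by omega, hp2a⟩⟩

private def Pm (m : ℕ) : Prop := ∀ a : ℤ,
  (∃ x₁ x₂ x₃ : ℤ, x₁^2+x₂^2+x₃^2 ≡ a [ZMOD (m:ℤ)]) →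
  ∃ b f : ℤ, (∃ y₁ y₂ y₃ : ℤ, y₁^2+y₂^2+y₃^2 ≡ b [ZMOD (m:ℤ)]) ∧
    a ≡ b * f^2 [ZMOD (m:ℤ)] ∧
    ∀ p : ℕ, p.Prime → p ∣ m → (p:ℤ) ∣ b → (p^2 ∣ m ∧ ¬ ((p:ℤ)^2 ∣ b))

private lemma Pm_one : Pm 1 := by
  intro a _
  refine ⟨1, 1, ⟨1, 0, 0, by simpa using Int.modEq_one⟩, by simpa using Int.modEq_one,
    fun p hpp hdvd => ?_⟩
  have := Nat.le_of_dvd one_pos hdvd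
  have := hpp.two_le
  omega

private lemma Pm_mul {m₁ m₂ : ℕ} (h1 : 1 < m₁) (h2 : 1 < m₂) (hco : Nat.Coprime m₁ m₂)
    (P1 : Pm m₁) (P2 : Pm m₂) : Pm (m₁ * m₂) := by
  intro a ⟨x₁, x₂, x₃, hx⟩
  have hd1 : ((m₁:ℤ)) ∣ ((m₁ * m₂ : ℕ) : ℤ) := by push_cast; exact ⟨m₂, rfl⟩
  have hd2 : ((m₂:ℤ)) ∣ ((m₁ * m₂ : ℕ) : ℤ) := by push_cast; exact ⟨m₁, by ring⟩
  obtain ⟨b₁, f₁, ⟨y₁, y₂, y₃, hy1⟩, hbf1, hc1⟩ := P1 a ⟨x₁, x₂, x₃, hx.of_dvd hd1⟩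
  obtain ⟨b₂, f₂, ⟨z₁, z₂, z₃, hy2⟩, hbf2, hc2⟩ := P2 a ⟨x₁, x₂, x₃, hx.of_dvd hd2⟩
  obtain ⟨u, v, huv⟩ : IsCoprime (m₁:ℤ) (m₂:ℤ) := by
    rw [Int.isCoprime_iff_gcd_eq_one]; exact_mod_cast hco
  set bl : ℤ → ℤ → ℤ := fun s₁ s₂ => s₁ * (v * m₂) + s₂ * (u * m₁) with hbl
  have hbl1 : ∀ s₁ s₂ : ℤ, bl s₁ s₂ ≡ s₁ [ZMOD (m₁:ℤ)] := by
    intro s₁ s₂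
    exact (mk_modEq (u * s₂ - u * s₁) (by simp only [hbl]; linear_combination s₁ * huv)).symm
  have hbl2 : ∀ s₁ s₂ : ℤ, bl s₁ s₂ ≡ s₂ [ZMOD (m₂:ℤ)] := by
    intro s₁ s₂
    exact (mk_modEq (v * s₁ - v * s₂) (by simp only [hbl]; linear_combination s₂ * huv)).symm
  have glue : ∀ {s t : ℤ}, s ≡ t [ZMOD (m₁:ℤ)] → s ≡ t [ZMOD (m₂:ℤ)] →
      s ≡ t [ZMOD ((m₁*m₂ : ℕ):ℤ)] := by
    intro s t g1 g2
    have : s ≡ t [ZMOD (m₁:ℤ) * (m₂:ℤ)] :=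
      (Int.modEq_and_modEq_iff_modEq_mul (by simpa using hco)).1 ⟨g1, g2⟩
    exact_mod_cast this
  refine ⟨bl b₁ b₂, bl f₁ f₂,
    ⟨bl y₁ z₁, bl y₂ z₂, bl y₃ z₃, glue ?_ ?_⟩, glue ?_ ?_, ?_⟩
  · calc (bl y₁ z₁)^2 + (bl y₂ z₂)^2 + (bl y₃ z₃)^2
        ≡ y₁^2 + y₂^2 + y₃^2 [ZMOD (m₁:ℤ)] := by
          exact (((hbl1 y₁ z₁).pow 2).add ((hbl1 y₂ z₂).pow 2)).add ((hbl1 y₃ z₃).pow 2)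
      _ ≡ b₁ [ZMOD (m₁:ℤ)] := hy1
      _ ≡ bl b₁ b₂ [ZMOD (m₁:ℤ)] := (hbl1 b₁ b₂).symm
  · calc (bl y₁ z₁)^2 + (bl y₂ z₂)^2 + (bl y₃ z₃)^2
        ≡ z₁^2 + z₂^2 + z₃^2 [ZMOD (m₂:ℤ)] := by
          exact (((hbl2 y₁ z₁).pow 2).add ((hbl2 y₂ z₂).pow 2)).add ((hbl2 y₃ z₃).pow 2)
      _ ≡ b₂ [ZMOD (m₂:ℤ)] := hy2
      _ ≡ bl b₁ b₂ [ZMOD (m₂:ℤ)] := (hbl2 b₁ b₂).symm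
  · calc a ≡ b₁ * f₁^2 [ZMOD (m₁:ℤ)] := hbf1
      _ ≡ (bl b₁ b₂) * (bl f₁ f₂)^2 [ZMOD (m₁:ℤ)] :=
          ((hbl1 b₁ b₂).mul ((hbl1 f₁ f₂).pow 2)).symm
  · calc a ≡ b₂ * f₂^2 [ZMOD (m₂:ℤ)] := hbf2
      _ ≡ (bl b₁ b₂) * (bl f₁ f₂)^2 [ZMOD (m₂:ℤ)] :=
          ((hbl2 b₁ b₂).mul ((hbl2 f₁ f₂).pow 2)).symm
  · intro p hpp hdvd hpb
    rcases (Nat.Prime.dvd_mul hpp).1 hdvd with hpm | hpm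
    · have hpZ : (p:ℤ) ∣ (m₁:ℤ) := by exact_mod_cast hpm
      have hb1 : (p:ℤ) ∣ b₁ := by
        have := ((hbl1 b₁ b₂).of_dvd hpZ)
        obtain ⟨c, hc⟩ := Int.modEq_iff_dvd.1 this
        obtain ⟨d, hd⟩ := hpb
        exact ⟨c + d, by linear_combination hc + hd⟩
      obtain ⟨hsq, hnsq⟩ := hc1 p hpp hpm hb1
      refine ⟨Dvd.dvd.mul_right hsq m₂, fun hq => hnsq ?_⟩
      have hp2Z : ((p:ℤ))^2 ∣ (m₁:ℤ) := by
        exact_mod_cast (by push_cast; exact_mod_cast hsq : ((p^2:ℕ):ℤ) ∣ (m₁:ℤ))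
      have := ((hbl1 b₁ b₂).of_dvd hp2Z)
      obtain ⟨c, hc⟩ := Int.modEq_iff_dvd.1 this
      obtain ⟨d, hd⟩ := hq
      exact ⟨c + d, by linear_combination hc + hd⟩
    · have hpZ : (p:ℤ) ∣ (m₂:ℤ) := by exact_mod_cast hpm
      have hb2 : (p:ℤ) ∣ b₂ := by
        have := ((hbl2 b₁ b₂).of_dvd hpZ)
        obtain ⟨c, hc⟩ := Int.modEq_iff_dvd.1 this
        obtain ⟨d, hd⟩ := hpb
        exact ⟨c + d, by linear_combination hc + hd⟩
      obtain ⟨hsq, hnsq⟩ := hc2 p hpp hpm hb2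
      refine ⟨Dvd.dvd.mul_left hsq m₁, fun hq => hnsq ?_⟩
      have hp2Z : ((p:ℤ))^2 ∣ (m₂:ℤ) := by
        exact_mod_cast (by push_cast; exact_mod_cast hsq : ((p^2:ℕ):ℤ) ∣ (m₂:ℤ))
      have := ((hbl2 b₁ b₂).of_dvd hp2Z)
      obtain ⟨c, hc⟩ := Int.modEq_iff_dvd.1 this
      obtain ⟨d, hd⟩ := hq
      exact ⟨c + d, by linear_combination hc + hd⟩

private lemma Pm_prime_pow (p n : ℕ) (hp : p.Prime) (hn : 0 < n) : Pm (p^n) := by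
  intro a ⟨x₁, x₂, x₃, hx⟩
  have hcast : (((p^n : ℕ)):ℤ) = ((p:ℤ))^n := by push_cast; ring
  rw [hcast] at hx
  have hq_eq : ∀ q : ℕ, q.Prime → q ∣ p^n → q = p := fun q hq hqd =>
    (Nat.prime_dvd_prime_iff_eq hq hp).1 (hq.dvd_of_dvd_pow hqd)
  by_cases hp2 : p = 2
  · subst hp2
    obtain ⟨b, f, y₁, y₂, y₃, hyb, hbf, hcond⟩ := two_strip n a x₁ x₂ x₃ (by exact_mod_cast hx)
    refine ⟨b, f, ⟨y₁, y₂, y₃, mk_modEq 0 (by rw [← hyb]; ring)⟩,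
      by rw [hcast]; exact_mod_cast hbf, ?_⟩
    intro q hq hqd hqb
    have := hq_eq q hq hqd
    subst this
    obtain ⟨h2e, h4b⟩ := hcond (by exact_mod_cast hqb)
    constructor
    · exact pow_dvd_pow 2 h2e
    · intro hc
      exact h4b (by
        have : ((2:ℕ):ℤ)^2 = (4:ℤ) := by norm_num
        rw [this] at hc
        exact hc)
  · obtain ⟨b, f, hbf, hcond⟩ := odd_strip p hp n a
    obtain ⟨y₁, y₂, y₃, hy⟩ := sq3_mod_odd_pow p hp hp2 n b
    refine ⟨b, f, ⟨y₁, y₂, y₃, by rw [hcast]; exact hy⟩, by rw [hcast]; exact hbf, ?_⟩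
    intro q hq hqd hqb
    have := hq_eq q hq hqd
    subst this
    obtain ⟨h2e, hnb⟩ := hcond hqb
    exact ⟨pow_dvd_pow q h2e, hnb⟩

private lemma Pm_all : ∀ m : ℕ, m ≠ 0 → Pm m :=
  Nat.recOnPosPrimePosCoprime
    (fun p n hp hn _ => Pm_prime_pow p n hp hn)
    (fun h => absurd rfl h)
    (fun _ => Pm_one)
    (fun _ _ ha hb hab Pa Pb _ =>
      Pm_mul ha hb hab (Pa (by omega)) (Pb (by omega)))

theorem stmt_6 (m : ℕ) (hm : 0 < m) (a : ℤ) (ha0 : 0 ≤ a) (ham : a < m)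
    (h : ∃ x₁ x₂ x₃ : ℤ, x₁ ^ 2 + x₂ ^ 2 + x₃ ^ 2 ≡ a [ZMOD m]) :
    ∃ a' : ℤ, Squarefree a' ∧ 1 ≤ a' ∧ a' ≤ 5 * m ∧
      (∃ x₁ x₂ x₃ : ℤ, x₁ ^ 2 + x₂ ^ 2 + x₃ ^ 2 ≡ a' [ZMOD m]) ∧
      ∃ d : ℤ, a ≡ a' * d ^ 2 [ZMOD m] := by
  obtain ⟨b, f, ⟨y₁, y₂, y₃, hy⟩, hbf, hcond⟩ := Pm_all m (by omega) a h
  have hmpos : (0:ℤ) < (m:ℤ) := by exact_mod_cast hm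
  set r := b % (m:ℤ) with hrdef
  have hr0 : 0 ≤ r := Int.emod_nonneg b (ne_of_gt hmpos)
  have hrm : r < (m:ℤ) := Int.emod_lt_of_pos b hmpos
  set N := r + (m:ℤ) with hNdef
  have hNb : N ≡ b [ZMOD (m:ℤ)] := by
    refine mk_modEq (b / m - 1) ?_
    rw [hNdef, hrdef, Int.emod_def]
    ring
  have hN1 : 1 ≤ N := by omega
  have hN2 : N ≤ 2 * (m:ℤ) := by omega
  have hNt : ((N.toNat : ℤ)) = N := Int.toNat_of_nonneg (by omega)
  obtain ⟨a₀, d₀, ha₀, hd₀, hfac, hsf⟩ :=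
    Nat.sq_mul_squarefree_of_pos (n := N.toNat) (by omega)
  have hfacZ : ((d₀:ℤ))^2 * (a₀:ℤ) = N := by rw [← hNt]; exact_mod_cast hfac
  have hdco : IsCoprime ((d₀:ℤ)) ((m:ℤ)) := by
    rw [Int.isCoprime_iff_gcd_eq_one]
    by_contra hne
    obtain ⟨q, hq, hqg⟩ := Nat.exists_prime_and_dvd hne
    rw [Int.gcd_natCast_natCast] at hqg
    have hqd : q ∣ d₀ := hqg.trans (Nat.gcd_dvd_left _ _)
    have hqm : q ∣ m := hqg.trans (Nat.gcd_dvd_right _ _)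
    have hqmZ : (q:ℤ) ∣ (m:ℤ) := Int.natCast_dvd_natCast.2 hqm
    have hq2N : ((q:ℤ))^2 ∣ N := by
      rw [← hfacZ]
      exact Dvd.dvd.mul_right
        (pow_dvd_pow_of_dvd (Int.natCast_dvd_natCast.2 hqd) 2) _
    have hqb : (q:ℤ) ∣ b := by
      have hd := Int.modEq_iff_dvd.1 (hNb.of_dvd hqmZ)
      have hqN : (q:ℤ) ∣ N := (dvd_pow_self ((q:ℤ)) (two_ne_zero)).trans hq2N
      obtain ⟨c1, hc1⟩ := hd
      obtain ⟨c2, hc2⟩ := hqN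
      exact ⟨c1 + c2, by linear_combination hc1 + hc2⟩
    obtain ⟨hq2m, hq2b⟩ := hcond q hq hqm hqb
    apply hq2b
    have hq2mZ : ((q:ℤ))^2 ∣ (m:ℤ) := by
      exact_mod_cast (Int.natCast_dvd_natCast.2 hq2m)
    obtain ⟨c1, hc1⟩ := Int.modEq_iff_dvd.1 (hNb.of_dvd hq2mZ)
    obtain ⟨c2, hc2⟩ := hq2N
    exact ⟨c1 + c2, by linear_combination hc1 + hc2⟩
  obtain ⟨s, t, hst⟩ := hdco
  have hds : (d₀:ℤ) * s ≡ 1 [ZMOD (m:ℤ)] :=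
    mk_modEq t (by linear_combination -hst)
  have ha₀Z : (1:ℤ) ≤ (a₀:ℤ) := by exact_mod_cast ha₀
  have hd₀Z : (1:ℤ) ≤ (d₀:ℤ) := by exact_mod_cast hd₀
  refine ⟨(a₀:ℤ), Int.squarefree_natCast.2 hsf, ha₀Z, ?_, ⟨y₁*s, y₂*s, y₃*s, ?_⟩,
    ⟨(d₀:ℤ)*f, ?_⟩⟩
  · have hd2 : (1:ℤ) ≤ (d₀:ℤ)^2 := by nlinarith
    have h1 : (a₀:ℤ) ≤ N := by nlinarith
    omega
  · calc (y₁*s)^2 + (y₂*s)^2 + (y₃*s)^2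
        = (y₁^2+y₂^2+y₃^2) * s^2 := by ring
      _ ≡ b * s^2 [ZMOD (m:ℤ)] := hy.mul_right (s^2)
      _ ≡ N * s^2 [ZMOD (m:ℤ)] := (hNb.symm).mul_right (s^2)
      _ = (a₀:ℤ) * ((d₀:ℤ)*s)^2 := by rw [← hfacZ]; ring
      _ ≡ (a₀:ℤ) * 1^2 [ZMOD (m:ℤ)] := (hds.pow 2).mul_left ((a₀:ℤ))
      _ = (a₀:ℤ) := by ring
  · calc a ≡ b * f^2 [ZMOD (m:ℤ)] := hbf
      _ ≡ N * f^2 [ZMOD (m:ℤ)] := (hNb.symm).mul_right (f^2)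
      _ = (a₀:ℤ) * ((d₀:ℤ)*f)^2 := by rw [← hfacZ]; ring
end

section
/- Let p be an odd prime, e ≥ 1, and let x₁, x₂, x₃, x₄ be integers with at least one x_j not divisible by p, satisfying x₁² + x₂² + x₃² + x₄² ≡ a (mod p^e) for an integer a that is squarefree, where additionally e ≥ 2 if p divides a. Then there exist integers y₁, y₂, y₃, y₄ with y₁² + y₂² + y₃² + y₄² ≡ 1 (mod p^e) and x₁y₁ + x₂y₂ + x₃y₃ + x₄y₄ ≡ 0 (mod p^e). -/
open Polynomial

lemma exists_inv {p : ℕ} (hp : p.Prime) {g : ℤ} (hg : ¬ (p:ℤ) ∣ g) (k : ℕ) :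
    ∃ i : ℤ, g * i ≡ 1 [ZMOD ((p:ℤ)^k)] := by
  have hpp : Prime (p:ℤ) := Nat.prime_iff_prime_int.mp hp
  have hco : IsCoprime ((p:ℤ)^k) g := (((hpp.coprime_iff_not_dvd).mpr hg)).pow_left
  obtain ⟨u, v, huv⟩ := hco
  refine ⟨v, (Int.modEq_iff_dvd.mpr ⟨u, ?_⟩)⟩
  linarith [huv]

lemma zmod_rep (p : ℕ) [Fact p.Prime] (hodd : p % 2 = 1) (D M : ZMod p) (hD : D ≠ 0) :
    ∃ a b : ZMod p, a ^ 2 + D * b ^ 2 = M := by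
  let f : (ZMod p)[X] := X ^ 2
  let g : (ZMod p)[X] := C D * X ^ 2 + C 0 * X + C (-M)
  have hg2 : g.degree = 2 := Polynomial.degree_quadratic hD
  obtain ⟨a, b, hab⟩ := FiniteField.exists_root_sum_quadratic (degree_X_pow 2) hg2
      (by rw [ZMod.card, hodd])
  refine ⟨a, b, ?_⟩
  simp only [f, g, eval_pow, eval_X, eval_add, eval_mul, eval_C, eval_pow] at hab
  linear_combination hab

lemma two_ne_zero_zmod (p : ℕ) [Fact p.Prime] (hodd : p % 2 = 1) : (2 : ZMod p) ≠ 0 := by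
  intro h
  rw [show (2 : ZMod p) = ((2:ℕ) : ZMod p) by norm_cast, ZMod.natCast_eq_zero_iff] at h
  have h2 := Nat.le_of_dvd (by norm_num) h
  have h3 := (Fact.out : p.Prime).two_le
  omega

lemma field_rep_aux (p : ℕ) [Fact p.Prime] (hodd : p % 2 = 1) (A B C M : ZMod p)
    (hd : C^2 - 4*A*B ≠ 0) (hA : A ≠ 0) :
    ∃ s t : ZMod p, A*s^2 + C*(s*t) + B*t^2 = M := by
  have h2 : (2 : ZMod p) ≠ 0 := two_ne_zero_zmod p hodd
  have h2A : (2*A : ZMod p) ≠ 0 := mul_ne_zero h2 hA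
  have h4A : (4*A : ZMod p) ≠ 0 := by
    have h4 : (4 : ZMod p) = 2*2 := by norm_num
    rw [h4]
    exact mul_ne_zero (mul_ne_zero h2 h2) hA
  have hD : (4*A*B - C^2 : ZMod p) ≠ 0 := by
    intro h; apply hd; linear_combination -h
  obtain ⟨a, b, hab⟩ := zmod_rep p hodd (4*A*B - C^2) (4*A*M) hD
  refine ⟨(2*A)⁻¹ * (a - C*b), b, ?_⟩
  set s : ZMod p := (2*A)⁻¹ * (a - C*b) with hs_def
  have hs : 2*A*s = a - C*b := by
    rw [hs_def, ← mul_assoc, mul_inv_cancel₀ h2A, one_mul]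
  have key : (4*A) * (A*s^2 + C*(s*b) + B*b^2) = (4*A) * M := by
    linear_combination (2*A*s + C*b + a) * hs + hab
  exact mul_left_cancel₀ h4A key

lemma field_rep (p : ℕ) [Fact p.Prime] (hodd : p % 2 = 1) (A B C M : ZMod p)
    (hd : C^2 - 4*A*B ≠ 0) :
    ∃ s t : ZMod p, A*s^2 + C*(s*t) + B*t^2 = M := by
  rcases eq_or_ne A 0 with hA | hA
  · rcases eq_or_ne B 0 with hB | hB
    · have hC : C ≠ 0 := by
        intro h; apply hd; rw [h, hA]; ring
      refine ⟨1, C⁻¹ * M, ?_⟩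
      rw [hA, hB]
      field_simp
      ring
    · obtain ⟨s, t, hst⟩ := field_rep_aux p hodd B A C M (by intro h; apply hd; linear_combination h) hB
      exact ⟨t, s, by linear_combination hst⟩
  · exact field_rep_aux p hodd A B C M hd hA

-- integer version mod p
lemma baseB {p : ℕ} (hp : p.Prime) (hodd : p % 2 = 1) (α β γ m : ℤ)
    (hd : ¬ (p:ℤ) ∣ (γ^2 - 4*α*β)) :
    ∃ s t : ℤ, α*s^2 + γ*(s*t) + β*t^2 ≡ m [ZMOD (p:ℤ)] := by
  haveI : Fact p.Prime := ⟨hp⟩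
  haveI : NeZero p := ⟨hp.ne_zero⟩
  have hd' : ((γ:ZMod p))^2 - 4*(α:ZMod p)*(β:ZMod p) ≠ 0 := by
    intro h
    apply hd
    rw [← ZMod.intCast_zmod_eq_zero_iff_dvd]
    push_cast
    linear_combination h
  obtain ⟨S, T, hST⟩ := field_rep p hodd (α:ZMod p) (β:ZMod p) (γ:ZMod p) (m:ZMod p) hd'
  obtain ⟨s, rfl⟩ := ZMod.intCast_surjective S
  obtain ⟨t, rfl⟩ := ZMod.intCast_surjective T
  refine ⟨s, t, ?_⟩
  have : ((α*s^2 + γ*(s*t) + β*t^2 : ℤ) : ZMod p) = ((m : ℤ) : ZMod p) := by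
    push_cast
    linear_combination hST
  exact (ZMod.intCast_eq_intCast_iff _ _ _).mp this

lemma stepAux {p : ℕ} (hp : p.Prime) (α β γ m s t : ℤ) (k : ℕ) (hk : 1 ≤ k)
    (hst : α*s^2 + γ*(s*t) + β*t^2 ≡ m [ZMOD ((p:ℤ)^k)])
    (hg : ¬ (p:ℤ) ∣ (2*α*s + γ*t)) :
    ∃ s' t' : ℤ, α*s'^2 + γ*(s'*t') + β*t'^2 ≡ m [ZMOD ((p:ℤ)^(k+1))] := by
  obtain ⟨r, hr⟩ : ((p:ℤ)^k) ∣ (α*s^2 + γ*(s*t) + β*t^2 - m) := (Int.ModEq.dvd hst.symm)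
  obtain ⟨i, hi⟩ := exists_inv hp hg 1
  set σ : ℤ := -i * r with hσ
  refine ⟨s + (p:ℤ)^k * σ, t, Int.modEq_iff_dvd.mpr ?_⟩
  have hpd : (p:ℤ) ∣ (r + σ * (2*α*s + γ*t)) := by
    obtain ⟨w, hw⟩ : ((p:ℤ)^1) ∣ (1 - (2*α*s + γ*t) * i) := Int.ModEq.dvd hi
    refine ⟨r * w, ?_⟩
    rw [pow_one] at hw
    have : r + σ * (2*α*s + γ*t) = r * (1 - (2*α*s + γ*t) * i) + 0 := by rw [hσ]; ring
    rw [this, hw]; ring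
  obtain ⟨w, hw⟩ := hpd
  refine ⟨-(w + (p:ℤ)^(k-1) * (α * σ^2)), ?_⟩
  have hkk : (p:ℤ)^(k+1) * ((p:ℤ)^(k-1)) = (p:ℤ)^(2*k) := by
    rw [← pow_add]; congr 1; omega
  have expand : m - (α*(s + (p:ℤ)^k * σ)^2 + γ*((s + (p:ℤ)^k * σ)*t) + β*t^2)
      = -((p:ℤ)^k * (r + σ * (2*α*s + γ*t)) + (p:ℤ)^k * (p:ℤ)^k * (α * σ^2)) := by
    linear_combination -hr
  rw [expand, hw]
  have h2k : (p:ℤ)^k * (p:ℤ)^k = (p:ℤ)^(2*k) := by rw [← pow_add]; congr 1; omega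
  rw [h2k, ← hkk]
  have : (p:ℤ)^k * ((p:ℤ) * w) = (p:ℤ)^(k+1) * w := by ring
  rw [this]; ring

lemma henselB {p : ℕ} (hp : p.Prime) (hodd : p % 2 = 1) (α β γ m : ℤ)
    (hd : ¬ (p:ℤ) ∣ (γ^2 - 4*α*β)) (hm : ¬ (p:ℤ) ∣ m) :
    ∀ e : ℕ, 1 ≤ e → ∃ s t : ℤ, α*s^2 + γ*(s*t) + β*t^2 ≡ m [ZMOD ((p:ℤ)^e)] := by
  intro e he
  induction e, he using Nat.le_induction with
  | base =>
    obtain ⟨s, t, h⟩ := baseB hp hodd α β γ m hd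
    exact ⟨s, t, by rwa [pow_one]⟩
  | succ k hk ih =>
    obtain ⟨s, t, hst⟩ := ih
    have hpdvd : (p:ℤ) ∣ ((p:ℤ)^k) := dvd_pow_self _ (by omega)
    have hBm : (p:ℤ) ∣ (α*s^2 + γ*(s*t) + β*t^2 - m) := hpdvd.trans (Int.ModEq.dvd hst.symm)
    have hgrad : ¬ (p:ℤ) ∣ (2*α*s + γ*t) ∨ ¬ (p:ℤ) ∣ (γ*s + 2*β*t) := by
      by_contra h
      push_neg at h
      obtain ⟨h1, h2⟩ := h
      have h2m : (p:ℤ) ∣ 2*m := by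
        have : 2*m = s * (2*α*s + γ*t) + t * (γ*s + 2*β*t) - 2*(α*s^2 + γ*(s*t) + β*t^2 - m) := by
          ring
        rw [this]
        exact dvd_sub (dvd_add (Dvd.dvd.mul_left h1 s) (Dvd.dvd.mul_left h2 t)) (Dvd.dvd.mul_left hBm 2)
      have hpp : Prime (p:ℤ) := Nat.prime_iff_prime_int.mp hp
      rcases hpp.dvd_mul.mp h2m with h | h
      · have : (p:ℕ) ∣ 2 := by exact_mod_cast h
        have := Nat.le_of_dvd (by norm_num) this
        have := hp.two_le
        omega
      · exact hm h
    rcases hgrad with hg | hg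
    · exact stepAux hp α β γ m s t k hk hst hg
    · obtain ⟨s', t', h'⟩ := stepAux hp β α γ m t s k hk (by
        have : β*t^2 + γ*(t*s) + α*s^2 = α*s^2 + γ*(s*t) + β*t^2 := by ring
        rwa [this]) (by
        have : 2*β*t + γ*s = γ*s + 2*β*t := by ring
        rwa [this])
      refine ⟨t', s', ?_⟩
      have : α*t'^2 + γ*(t'*s') + β*s'^2 = β*s'^2 + γ*(s'*t') + α*t'^2 := by ring
      rw [this]
      exact h'

lemma not_dvd_two {p : ℕ} (hp : p.Prime) (hodd : p % 2 = 1) : ¬ (p:ℤ) ∣ 2 := by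
  intro h
  have h' : p ∣ 2 := by exact_mod_cast h
  have := Nat.le_of_dvd (by norm_num) h'
  have := hp.two_le
  omega

lemma key1 {p : ℕ} (hp : p.Prime) (hodd : p % 2 = 1) (e : ℕ) (he : 1 ≤ e)
    (x₁ x₂ x₃ x₄ : ℤ) (h1 : ¬ (p:ℤ) ∣ x₁) (h2 : ¬ (p:ℤ) ∣ x₂)
    (hS : (p:ℤ) ∣ (x₁^2 + x₂^2 + x₃^2 + x₄^2)) :
    ∃ y₁ y₂ y₃ y₄ : ℤ,
      y₁^2+y₂^2+y₃^2+y₄^2 ≡ 1 [ZMOD ((p:ℤ)^e)] ∧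
      x₁*y₁+x₂*y₂+x₃*y₃+x₄*y₄ ≡ 0 [ZMOD ((p:ℤ)^e)] := by
  have hpp : Prime (p:ℤ) := Nat.prime_iff_prime_int.mp hp
  have hp2 : ¬ (p:ℤ) ∣ 2 := not_dvd_two hp hodd
  have hd : ¬ (p:ℤ) ∣ ((2*x₃*x₄)^2 - 4*(x₂^2+x₃^2)*(x₂^2+x₄^2)) := by
    intro h
    have h' : (p:ℤ) ∣ (2*x₂*x₁)^2 := by
      have heq : (2*x₂*x₁)^2 = ((2*x₃*x₄)^2 - 4*(x₂^2+x₃^2)*(x₂^2+x₄^2))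
          + 4*x₂^2*(x₁^2+x₂^2+x₃^2+x₄^2) := by ring
      rw [heq]
      exact dvd_add h (Dvd.dvd.mul_left hS _)
    have h'' := hpp.dvd_of_dvd_pow h'
    rcases hpp.dvd_mul.mp h'' with h3 | h3
    · rcases hpp.dvd_mul.mp h3 with h4 | h4
      · exact hp2 h4
      · exact h2 h4
    · exact h1 h3
  have hm : ¬ (p:ℤ) ∣ (1:ℤ) := hpp.not_dvd_one
  obtain ⟨s, t, hst⟩ := henselB hp hodd (x₂^2+x₃^2) (x₂^2+x₄^2) (2*x₃*x₄) 1 hd hm e he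
  refine ⟨0, -(s*x₃+t*x₄), s*x₂, t*x₂, ?_, ?_⟩
  · have heq : (0:ℤ)^2 + (-(s*x₃+t*x₄))^2 + (s*x₂)^2 + (t*x₂)^2
        = (x₂^2+x₃^2)*s^2 + (2*x₃*x₄)*(s*t) + (x₂^2+x₄^2)*t^2 := by ring
    rw [heq]; exact hst
  · have heq : x₁*0 + x₂*(-(s*x₃+t*x₄)) + x₃*(s*x₂) + x₄*(t*x₂) = 0 := by ring
    rw [heq]

lemma key2 {p : ℕ} (hp : p.Prime) (hodd : p % 2 = 1) (e : ℕ) (he : 1 ≤ e)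
    (x₁ x₂ x₃ x₄ : ℤ) (h1 : ¬ (p:ℤ) ∣ x₁)
    (hS : (p:ℤ) ∣ (x₁^2 + x₂^2 + x₃^2 + x₄^2)) :
    ∃ y₁ y₂ y₃ y₄ : ℤ,
      y₁^2+y₂^2+y₃^2+y₄^2 ≡ 1 [ZMOD ((p:ℤ)^e)] ∧
      x₁*y₁+x₂*y₂+x₃*y₃+x₄*y₄ ≡ 0 [ZMOD ((p:ℤ)^e)] := by
  by_cases h2 : (p:ℤ) ∣ x₂
  · by_cases h3 : (p:ℤ) ∣ x₃
    · by_cases h4 : (p:ℤ) ∣ x₄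
      · exfalso
        apply h1
        have hpp : Prime (p:ℤ) := Nat.prime_iff_prime_int.mp hp
        apply hpp.dvd_of_dvd_pow (n := 2)
        have heq : x₁^2 = (x₁^2 + x₂^2 + x₃^2 + x₄^2) - x₂*x₂ - x₃*x₃ - x₄*x₄ := by ring
        rw [heq]
        exact dvd_sub (dvd_sub (dvd_sub hS (h2.mul_left _)) (h3.mul_left _)) (h4.mul_left _)
      · obtain ⟨a, b, c, d, hsq, ho⟩ := key1 hp hodd e he x₁ x₄ x₃ x₂ h1 h4 (by
          have heq : x₁^2 + x₄^2 + x₃^2 + x₂^2 = x₁^2 + x₂^2 + x₃^2 + x₄^2 := by ring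
          rw [heq]; exact hS)
        refine ⟨a, d, c, b, ?_, ?_⟩
        · have heq : a^2+d^2+c^2+b^2 = a^2+b^2+c^2+d^2 := by ring
          rw [heq]; exact hsq
        · have heq : x₁*a+x₂*d+x₃*c+x₄*b = x₁*a+x₄*b+x₃*c+x₂*d := by ring
          rw [heq]; exact ho
    · obtain ⟨a, b, c, d, hsq, ho⟩ := key1 hp hodd e he x₁ x₃ x₂ x₄ h1 h3 (by
        have heq : x₁^2 + x₃^2 + x₂^2 + x₄^2 = x₁^2 + x₂^2 + x₃^2 + x₄^2 := by ring
        rw [heq]; exact hS)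
      refine ⟨a, c, b, d, ?_, ?_⟩
      · have heq : a^2+c^2+b^2+d^2 = a^2+b^2+c^2+d^2 := by ring
        rw [heq]; exact hsq
      · have heq : x₁*a+x₂*c+x₃*b+x₄*d = x₁*a+x₃*b+x₂*c+x₄*d := by ring
        rw [heq]; exact ho
  · exact key1 hp hodd e he x₁ x₂ x₃ x₄ h1 h2 hS

theorem stmt_12 (p : ℕ) (hp : p.Prime) (hodd : Odd p) (e : ℕ) (he : 1 ≤ e)
    (a x₁ x₂ x₃ x₄ : ℤ) (hsf : Squarefree a)
    (hpa : (p : ℤ) ∣ a → 2 ≤ e)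
    (hx : ¬ (p : ℤ) ∣ x₁ ∨ ¬ (p : ℤ) ∣ x₂ ∨ ¬ (p : ℤ) ∣ x₃ ∨ ¬ (p : ℤ) ∣ x₄)
    (hcong : x₁ ^ 2 + x₂ ^ 2 + x₃ ^ 2 + x₄ ^ 2 ≡ a [ZMOD (p ^ e : ℕ)]) :
    ∃ y₁ y₂ y₃ y₄ : ℤ,
      y₁ ^ 2 + y₂ ^ 2 + y₃ ^ 2 + y₄ ^ 2 ≡ 1 [ZMOD (p ^ e : ℕ)] ∧
      x₁ * y₁ + x₂ * y₂ + x₃ * y₃ + x₄ * y₄ ≡ 0 [ZMOD (p ^ e : ℕ)] := by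
  have hodd' : p % 2 = 1 := Nat.odd_iff.mp hodd
  have hcast : ((p ^ e : ℕ) : ℤ) = (p:ℤ)^e := by push_cast; ring
  rw [hcast] at hcong ⊢
  have hpp : Prime (p:ℤ) := Nat.prime_iff_prime_int.mp hp
  have hpe : (p:ℤ) ∣ (p:ℤ)^e := dvd_pow_self _ (by omega)
  have hSa : (p:ℤ) ∣ (a - (x₁^2 + x₂^2 + x₃^2 + x₄^2)) := hpe.trans hcong.dvd
  by_cases hdvd : (p:ℤ) ∣ a
  · -- p ∣ a : use key2
    have hS : (p:ℤ) ∣ (x₁^2 + x₂^2 + x₃^2 + x₄^2) := by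
      have heq : x₁^2 + x₂^2 + x₃^2 + x₄^2 = a - (a - (x₁^2 + x₂^2 + x₃^2 + x₄^2)) := by ring
      rw [heq]
      exact dvd_sub hdvd hSa
    rcases hx with h | h | h | h
    · exact key2 hp hodd' e he x₁ x₂ x₃ x₄ h hS
    · obtain ⟨b, aa, c, d, hsq, ho⟩ := key2 hp hodd' e he x₂ x₁ x₃ x₄ h (by
        have heq : x₂^2 + x₁^2 + x₃^2 + x₄^2 = x₁^2 + x₂^2 + x₃^2 + x₄^2 := by ring
        rw [heq]; exact hS)
      refine ⟨aa, b, c, d, ?_, ?_⟩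
      · have heq : aa^2+b^2+c^2+d^2 = b^2+aa^2+c^2+d^2 := by ring
        rw [heq]; exact hsq
      · have heq : x₁*aa+x₂*b+x₃*c+x₄*d = x₂*b+x₁*aa+x₃*c+x₄*d := by ring
        rw [heq]; exact ho
    · obtain ⟨c, b, aa, d, hsq, ho⟩ := key2 hp hodd' e he x₃ x₂ x₁ x₄ h (by
        have heq : x₃^2 + x₂^2 + x₁^2 + x₄^2 = x₁^2 + x₂^2 + x₃^2 + x₄^2 := by ring
        rw [heq]; exact hS)
      refine ⟨aa, b, c, d, ?_, ?_⟩
      · have heq : aa^2+b^2+c^2+d^2 = c^2+b^2+aa^2+d^2 := by ring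
        rw [heq]; exact hsq
      · have heq : x₁*aa+x₂*b+x₃*c+x₄*d = x₃*c+x₂*b+x₁*aa+x₄*d := by ring
        rw [heq]; exact ho
    · obtain ⟨d, b, c, aa, hsq, ho⟩ := key2 hp hodd' e he x₄ x₂ x₃ x₁ h (by
        have heq : x₄^2 + x₂^2 + x₃^2 + x₁^2 = x₁^2 + x₂^2 + x₃^2 + x₄^2 := by ring
        rw [heq]; exact hS)
      refine ⟨aa, b, c, d, ?_, ?_⟩
      · have heq : aa^2+b^2+c^2+d^2 = d^2+b^2+c^2+aa^2 := by ring
        rw [heq]; exact hsq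
      · have heq : x₁*aa+x₂*b+x₃*c+x₄*d = x₄*d+x₂*b+x₃*c+x₁*aa := by ring
        rw [heq]; exact ho
  · -- p ∤ a : orthogonal-vector construction
    have hpS : ¬ (p:ℤ) ∣ (x₁^2 + x₂^2 + x₃^2 + x₄^2) := by
      intro h
      apply hdvd
      have heq : a = (a - (x₁^2 + x₂^2 + x₃^2 + x₄^2)) + (x₁^2 + x₂^2 + x₃^2 + x₄^2) := by ring
      rw [heq]
      exact dvd_add hSa h
    obtain ⟨c, hc⟩ := exists_inv hp hpS e
    have hpc : ¬ (p:ℤ) ∣ c := by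
      intro h
      apply hpp.not_dvd_one
      have h1 : (p:ℤ)^e ∣ (1 - (x₁^2 + x₂^2 + x₃^2 + x₄^2) * c) := hc.dvd
      have heq : (1:ℤ) = (1 - (x₁^2 + x₂^2 + x₃^2 + x₄^2) * c)
          + (x₁^2 + x₂^2 + x₃^2 + x₄^2) * c := by ring
      rw [heq]
      exact dvd_add (hpe.trans h1) (h.mul_left _)
    have hd4 : ¬ (p:ℤ) ∣ ((0:ℤ)^2 - 4*1*1) := by
      intro h
      have h2 : (p:ℤ) ∣ (2*2 : ℤ) := by
        have heq : (2*2:ℤ) = -((0:ℤ)^2 - 4*1*1) := by ring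
        rw [heq]
        exact dvd_neg.mpr h
      rcases hpp.dvd_mul.mp h2 with h3 | h3 <;> exact not_dvd_two hp hodd' h3
    obtain ⟨u, v, huv⟩ := henselB hp hodd' 1 1 0 c hd4 hpc e he
    refine ⟨u*x₂ + v*x₃, -(u*x₁) - v*x₄, u*x₄ - v*x₁, -(u*x₃) + v*x₂, ?_, ?_⟩
    · have heq : (u*x₂ + v*x₃)^2 + (-(u*x₁) - v*x₄)^2 + (u*x₄ - v*x₁)^2 + (-(u*x₃) + v*x₂)^2
          = (1*u^2 + 0*(u*v) + 1*v^2) * (x₁^2 + x₂^2 + x₃^2 + x₄^2) := by ring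
      rw [heq]
      calc (1*u^2 + 0*(u*v) + 1*v^2) * (x₁^2 + x₂^2 + x₃^2 + x₄^2)
          ≡ c * (x₁^2 + x₂^2 + x₃^2 + x₄^2) [ZMOD ((p:ℤ)^e)] := huv.mul_right _
        _ = (x₁^2 + x₂^2 + x₃^2 + x₄^2) * c := by ring
        _ ≡ 1 [ZMOD ((p:ℤ)^e)] := hc
    · have heq : x₁*(u*x₂ + v*x₃) + x₂*(-(u*x₁) - v*x₄) + x₃*(u*x₄ - v*x₁) + x₄*(-(u*x₃) + v*x₂)
          = 0 := by ring
      rw [heq]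
end

section
/- Let m be a positive integer with ν₂(m) ≤ 1 (m is not divisible by 4), and let a be any integer. Then there exists an integer b with b ≡ a (mod m), 4 ∤ b, and b expressible as a sum of three squares of integers. -/
-- Base case: at any prime p, every residue is x^2+y^2+z^2 with p ∤ x.
lemma aux_prime (p : ℕ) (hp : p.Prime) (a : ℤ) :
    ∃ x y z : ℤ, ¬ (p:ℤ) ∣ x ∧ (p:ℤ) ∣ (x^2 + y^2 + z^2 - a) := by
  haveI : Fact p.Prime := ⟨hp⟩
  have key : ∀ c : ZMod p, c ≠ 0 → ∃ u v : ZMod p, u ≠ 0 ∧ u^2 + v^2 = c := by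
    intro c hc
    obtain ⟨u, v, huv⟩ := ZMod.sq_add_sq p c
    rcases eq_or_ne u 0 with hu | hu
    · refine ⟨v, u, ?_, by rw [add_comm]; exact huv⟩
      intro hv
      rw [hu, hv] at huv
      simp at huv
      exact hc huv.symm
    · exact ⟨u, v, hu, huv⟩
  by_cases ha : (a : ZMod p) = 0
  · obtain ⟨u, v, hu, huv⟩ := key ((a : ZMod p) - 1) (by rw [ha]; simp)
    refine ⟨(u.val : ℤ), (v.val : ℤ), 1, ?_, ?_⟩
    · rw [← ZMod.intCast_zmod_eq_zero_iff_dvd]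
      push_cast
      simpa using hu
    · rw [← ZMod.intCast_zmod_eq_zero_iff_dvd]
      push_cast
      simp only [ZMod.natCast_val, ZMod.cast_id]
      rw [huv]
      ring
  · obtain ⟨u, v, hu, huv⟩ := key (a : ZMod p) ha
    refine ⟨(u.val : ℤ), (v.val : ℤ), 0, ?_, ?_⟩
    · rw [← ZMod.intCast_zmod_eq_zero_iff_dvd]
      push_cast
      simpa using hu
    · rw [← ZMod.intCast_zmod_eq_zero_iff_dvd]
      push_cast
      simp only [ZMod.natCast_val, ZMod.cast_id]
      rw [huv]
      ring

-- Hensel lifting to odd prime powers.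
lemma aux_primepow (p : ℕ) (hp : p.Prime) (hp2 : p ≠ 2) (k : ℕ) (a : ℤ) :
    ∃ x y z : ℤ, ¬ (p:ℤ) ∣ x ∧ (p:ℤ)^(k+1) ∣ (x^2 + y^2 + z^2 - a) := by
  haveI : Fact p.Prime := ⟨hp⟩
  induction k with
  | zero => simpa using aux_prime p hp a
  | succ k ih =>
    obtain ⟨x, y, z, hx, hdvd⟩ := ih
    obtain ⟨d, hd⟩ := hdvd
    have h2x : ((2 * x : ℤ) : ZMod p) ≠ 0 := by
      push_cast
      refine mul_ne_zero ?_ ?_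
      · have : ((2 : ℕ) : ZMod p) ≠ 0 := by
          rw [Ne, ZMod.natCast_eq_zero_iff]
          intro h
          exact hp2 ((Nat.prime_dvd_prime_iff_eq hp Nat.prime_two).mp h)
        simpa using this
      · rw [Ne, ZMod.intCast_zmod_eq_zero_iff_dvd]
        exact hx
    obtain ⟨w, hw⟩ : ∃ w : ZMod p, ((2 * x : ℤ) : ZMod p) * w = ((-d : ℤ) : ZMod p) :=
      ⟨((-d : ℤ) : ZMod p) / ((2 * x : ℤ) : ZMod p), mul_div_cancel₀ _ h2x⟩
    set t : ℤ := (w.val : ℤ) with ht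
    have hpt : (p:ℤ) ∣ 2 * x * t + d := by
      rw [← ZMod.intCast_zmod_eq_zero_iff_dvd]
      push_cast
      have hwc : ((w.val : ℤ) : ZMod p) = w := by
        push_cast
        simp [ZMod.natCast_val, ZMod.cast_id]
      calc (2 : ZMod p) * (x : ZMod p) * ((w.val : ℤ) : ZMod p) + (d : ZMod p)
          = ((2 * x : ℤ) : ZMod p) * w + (d : ZMod p) := by rw [hwc]; push_cast; ring
        _ = 0 := by rw [hw]; push_cast; ring
    refine ⟨x + t * (p:ℤ)^(k+1), y, z, ?_, ?_⟩
    · intro hdx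
      apply hx
      have hpk : (p:ℤ) ∣ t * (p:ℤ)^(k+1) := Dvd.dvd.mul_left (dvd_pow_self _ (Nat.succ_ne_zero k)) t
      have := hdx.sub hpk
      simpa using this
    · have key : (x + t * (p:ℤ)^(k+1))^2 + y^2 + z^2 - a
          = (p:ℤ)^(k+1) * ((2 * x * t + d) + t^2 * (p:ℤ)^(k+1)) := by
        linear_combination hd
      rw [key, pow_succ]
      exact mul_dvd_mul dvd_rfl (hpt.add (Dvd.dvd.mul_left (dvd_pow_self _ (Nat.succ_ne_zero k)) _))

-- Surjectivity of sum of three squares on ZMod n for odd n.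
lemma aux_odd (n : ℕ) (hn : Odd n) :
    ∀ A : ZMod n, ∃ x y z : ZMod n, x^2 + y^2 + z^2 = A := by
  induction n using Nat.recOnPrimeCoprime with
  | zero => simp at hn
  | prime_pow p k hpp =>
    rcases Nat.eq_zero_or_pos k with rfl | hk
    · rw [pow_zero]
      intro A
      exact ⟨0, 0, 0, Subsingleton.elim _ _⟩
    · have hp' : p.Prime := hpp
      have hp2 : p ≠ 2 := by
        rintro rfl
        obtain ⟨j, hj⟩ := hn
        obtain ⟨c, hc⟩ : (2:ℕ) ∣ 2^k := dvd_pow_self 2 (by omega)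
        omega
      intro A
      obtain ⟨x, y, z, _, hdvd⟩ := aux_primepow p hp' hp2 (k-1) ((A.val : ℤ))
      have hkk : k - 1 + 1 = k := Nat.succ_pred_eq_of_pos hk
      rw [hkk] at hdvd
      refine ⟨(x : ZMod (p^k)), (y : ZMod (p^k)), (z : ZMod (p^k)), ?_⟩
      have h0 : ((x^2 + y^2 + z^2 - (A.val : ℤ) : ℤ) : ZMod (p^k)) = 0 := by
        rw [ZMod.intCast_zmod_eq_zero_iff_dvd]
        exact_mod_cast hdvd
      haveI : NeZero (p^k) := ⟨pow_ne_zero _ hp'.ne_zero⟩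
      push_cast at h0
      rw [sub_eq_zero] at h0
      rw [h0]
      simp [ZMod.natCast_val, ZMod.cast_id]
  | coprime a b ha hb hab iha ihb =>
    rw [Nat.odd_mul] at hn
    have iha' := iha hn.1
    have ihb' := ihb hn.2
    intro A
    have e := ZMod.chineseRemainder hab
    obtain ⟨x₁, y₁, z₁, h1⟩ := iha' (e A).1
    obtain ⟨x₂, y₂, z₂, h2⟩ := ihb' (e A).2
    refine ⟨e.symm (x₁, x₂), e.symm (y₁, y₂), e.symm (z₁, z₂), ?_⟩
    have h3 : (e.symm (x₁, x₂))^2 + (e.symm (y₁, y₂))^2 + (e.symm (z₁, z₂))^2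
        = e.symm ((x₁, x₂)^2 + (y₁, y₂)^2 + (z₁, z₂)^2) := by
      rw [map_add, map_add, map_pow, map_pow, map_pow]
    rw [h3]
    have h4 : ((x₁, x₂)^2 + (y₁, y₂)^2 + (z₁, z₂)^2 : ZMod a × ZMod b) = e A := by
      ext
      · simpa using h1
      · simpa using h2
    rw [h4, RingEquiv.symm_apply_apply]

lemma sq_mod4_odd (X : ℤ) (h : X % 2 = 1) : X^2 % 4 = 1 := by
  obtain ⟨k, hk⟩ : ∃ k, X = 2*k + 1 := ⟨X / 2, by omega⟩
  have h2 : X^2 = 4 * (k * k + k) + 1 := by rw [hk]; ring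
  omega

lemma sq_mod4_even (X : ℤ) (h : X % 2 = 0) : X^2 % 4 = 0 := by
  obtain ⟨k, hk⟩ : ∃ k, X = 2*k := ⟨X / 2, by omega⟩
  have h2 : X^2 = 4 * (k * k) := by rw [hk]; ring
  omega

-- lift a residue with prescribed parity
lemma lift_parity {n : ℕ} (hn : Odd n) (x : ZMod n) (c : ℤ) :
    ∃ X : ℤ, ((X : ZMod n) = x) ∧ X % 2 = c % 2 := by
  haveI : NeZero n := ⟨by rintro rfl; simp at hn⟩
  have hno : (n : ℤ) % 2 = 1 := by
    obtain ⟨k, hk⟩ := hn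
    omega
  by_cases h : (x.val : ℤ) % 2 = c % 2
  · exact ⟨(x.val : ℤ), by push_cast; simp [ZMod.natCast_val, ZMod.cast_id], h⟩
  · refine ⟨(x.val : ℤ) + n, ?_, by omega⟩
    push_cast
    simp [ZMod.natCast_val, ZMod.cast_id]

theorem stmt_18 (m : ℕ) (hm : 0 < m) (h4 : ¬ 4 ∣ m) (a : ℤ) :
    ∃ b : ℤ, b ≡ a [ZMOD m] ∧ ¬ (4 : ℤ) ∣ b ∧
      ∃ x₁ x₂ x₃ : ℤ, b = x₁ ^ 2 + x₂ ^ 2 + x₃ ^ 2 := by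
  rcases Nat.even_or_odd m with hme | hmo
  · -- m = 2 * m', m' odd
    obtain ⟨m', rfl⟩ : ∃ m', m = 2 * m' := ⟨m / 2, by
      obtain ⟨j, hj⟩ := hme; omega⟩
    have hm'odd : Odd m' := by
      rcases Nat.even_or_odd m' with ⟨j, hj⟩ | h
      · exfalso; exact h4 ⟨j, by omega⟩
      · exact h
    obtain ⟨x, y, z, hxyz⟩ := aux_odd m' hm'odd (a : ZMod m')
    obtain ⟨X, hX, hXp⟩ := lift_parity hm'odd x 1
    obtain ⟨Y, hY, hYp⟩ := lift_parity hm'odd y (a + 1)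
    obtain ⟨Z, hZ, hZp⟩ := lift_parity hm'odd z 0
    have hX4 : X^2 % 4 = 1 := sq_mod4_odd X (by omega)
    have hZ4 : Z^2 % 4 = 0 := sq_mod4_even Z (by omega)
    have hY4 : (a % 2 = 0 ∧ Y^2 % 4 = 1) ∨ (a % 2 = 1 ∧ Y^2 % 4 = 0) := by
      by_cases ha2 : a % 2 = 0
      · exact Or.inl ⟨ha2, sq_mod4_odd Y (by omega)⟩
      · exact Or.inr ⟨by omega, sq_mod4_even Y (by omega)⟩
    refine ⟨X^2 + Y^2 + Z^2, ?_, ?_, X, Y, Z, rfl⟩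
    · have hmod2 : X^2 + Y^2 + Z^2 ≡ a [ZMOD 2] := by
        show (X^2 + Y^2 + Z^2) % 2 = a % 2
        omega
      have hmodm' : X^2 + Y^2 + Z^2 ≡ a [ZMOD (m' : ℤ)] := by
        rw [← ZMod.intCast_eq_intCast_iff]
        push_cast
        rw [hX, hY, hZ, hxyz]
      have hgcd : Int.gcd 2 (m' : ℤ) = 1 := by
        have h1 : Int.gcd ((2:ℕ):ℤ) ((m':ℕ):ℤ) = Nat.gcd 2 m' := Int.gcd_natCast_natCast 2 m'
        have h2 : Nat.gcd 2 m' = 1 := Nat.coprime_two_left.mpr hm'odd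
        simpa [h2] using h1
      have hmul := (Int.modEq_and_modEq_iff_modEq_mul hgcd).mp ⟨hmod2, hmodm'⟩
      have hcast : ((2 * m' : ℕ) : ℤ) = 2 * (m' : ℤ) := by push_cast; ring
      rw [hcast]
      exact hmul
    · intro ⟨k, hk⟩
      omega
  · -- m odd
    obtain ⟨x, y, z, hxyz⟩ := aux_odd m hmo (a : ZMod m)
    obtain ⟨X, hX, hXp⟩ := lift_parity hmo x 1
    obtain ⟨Y, hY, hYp⟩ := lift_parity hmo y 0
    obtain ⟨Z, hZ, hZp⟩ := lift_parity hmo z 0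
    have hX4 : X^2 % 4 = 1 := sq_mod4_odd X (by omega)
    have hY4 : Y^2 % 4 = 0 := sq_mod4_even Y (by omega)
    have hZ4 : Z^2 % 4 = 0 := sq_mod4_even Z (by omega)
    refine ⟨X^2 + Y^2 + Z^2, ?_, ?_, X, Y, Z, rfl⟩
    · rw [← ZMod.intCast_eq_intCast_iff]
      push_cast
      rw [hX, hY, hZ, hxyz]
    · intro ⟨k, hk⟩
      omega
end

section
/- Let x₁, x₂, x₃, x₄ be integers with x₁²+x₂²+x₃²+x₄² ≡ a (mod p^e) for an odd prime p with p ∤ x₁, p ∤ x₄, p ∤ (x₂²+x₄²), and p ∤ (x₁²+x₃²). If r, s are integers satisfying x₄²(x₁²+x₃²)r² + x₁²(x₂²+x₄²)s² ≡ x₁²x₄² (mod p^e), then setting y₁ ≡ −r x₃/x₁, y₂ ≡ s, y₃ ≡ r, y₄ ≡ −s x₂/x₄ (mod p^e) yields y₁²+y₂²+y₃²+y₄² ≡ 1 (mod p^e) and x₁y₁+x₂y₂+x₃y₃+x₄y₄ ≡ 0 (mod p^e). -/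
theorem stmt_19 (p : ℕ) (hp : p.Prime) (hodd : Odd p) (e : ℕ) (he : 1 ≤ e)
    (a x₁ x₂ x₃ x₄ r s y₁ y₂ y₃ y₄ : ℤ)
    (hcong : x₁ ^ 2 + x₂ ^ 2 + x₃ ^ 2 + x₄ ^ 2 ≡ a [ZMOD (p ^ e : ℕ)])
    (hx1 : ¬ (p : ℤ) ∣ x₁) (hx4 : ¬ (p : ℤ) ∣ x₄)
    (h24 : ¬ (p : ℤ) ∣ (x₂ ^ 2 + x₄ ^ 2)) (h13 : ¬ (p : ℤ) ∣ (x₁ ^ 2 + x₃ ^ 2))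
    (hrs : x₄ ^ 2 * (x₁ ^ 2 + x₃ ^ 2) * r ^ 2 + x₁ ^ 2 * (x₂ ^ 2 + x₄ ^ 2) * s ^ 2
      ≡ x₁ ^ 2 * x₄ ^ 2 [ZMOD (p ^ e : ℕ)])
    (hy1 : x₁ * y₁ ≡ -(r * x₃) [ZMOD (p ^ e : ℕ)])
    (hy2 : y₂ ≡ s [ZMOD (p ^ e : ℕ)])
    (hy3 : y₃ ≡ r [ZMOD (p ^ e : ℕ)])
    (hy4 : x₄ * y₄ ≡ -(s * x₂) [ZMOD (p ^ e : ℕ)]) :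
    y₁ ^ 2 + y₂ ^ 2 + y₃ ^ 2 + y₄ ^ 2 ≡ 1 [ZMOD (p ^ e : ℕ)] ∧
      x₁ * y₁ + x₂ * y₂ + x₃ * y₃ + x₄ * y₄ ≡ 0 [ZMOD (p ^ e : ℕ)] := by
  set N := p ^ e with hN
  
  rw [← ZMod.intCast_eq_intCast_iff] at hrs hy1 hy2 hy3 hy4
  rw [← ZMod.intCast_eq_intCast_iff, ← ZMod.intCast_eq_intCast_iff]
  push_cast at hrs hy1 hy2 hy3 hy4 ⊢
  have hp' : Prime (p : ℤ) := Nat.prime_iff_prime_int.mp hp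
  have hc1 : IsCoprime (x₁ : ℤ) (p : ℤ) := (hp'.coprime_iff_not_dvd.mpr hx1).symm
  have hc4 : IsCoprime (x₄ : ℤ) (p : ℤ) := (hp'.coprime_iff_not_dvd.mpr hx4).symm
  have hc : IsCoprime (x₁ * x₄) ((p : ℤ) ^ e) := (hc1.mul_left hc4).pow_right
  obtain ⟨u, v, huv⟩ := hc
  have hpe : ((p : ZMod N) ^ e) = 0 := by
    have : ((N : ℕ) : ZMod N) = 0 := ZMod.natCast_self N
    rw [hN] at this
    push_cast at this
    exact this
  have hkey : (u : ZMod N) * ((x₁ : ZMod N) * (x₄ : ZMod N)) = 1 := by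
    have h := congrArg (fun z : ℤ => (z : ZMod N)) huv
    push_cast at h
    rw [hpe] at h
    linear_combination h
  have hu : IsUnit ((x₁ : ZMod N) * (x₄ : ZMod N)) :=
    IsUnit.of_mul_eq_one _ ((mul_comm _ _).trans hkey)
  constructor
  · apply (hu.pow 2).mul_left_cancel
    rw [mul_one]
    linear_combination ((x₄:ZMod N)^2 * ((x₁:ZMod N)*y₁ - r*x₃)) * hy1 +
      ((x₁:ZMod N)^2 * ((x₄:ZMod N)*y₄ - s*x₂)) * hy4 +
      ((x₁:ZMod N)^2 * (x₄:ZMod N)^2 * ((y₂:ZMod N) + s)) * hy2 +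
      ((x₁:ZMod N)^2 * (x₄:ZMod N)^2 * ((y₃:ZMod N) + r)) * hy3 + hrs
  · apply hu.mul_left_cancel
    rw [mul_zero]
    linear_combination ((x₁:ZMod N) * x₄) * hy1 + ((x₁:ZMod N) * x₄ * x₂) * hy2 +
      ((x₁:ZMod N) * x₄ * x₃) * hy3 + ((x₁:ZMod N) * x₄) * hy4
end
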